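/- Let H=(V,E,w) be a honeycomb and F ⊆ E. If every vertex of H is contained in at least two distinct maximal lines of H, each of which contains an edge from F, then H is F-extreme. -/

import Mathlib

open scoped BigOperators

attribute [local instance] Classical.propDecidable

noncomputable section

/-- Points of the plane. -/
abbrev Pt : Type := ℝ × ℝ

/-- Inner product on the plane. -/
def pdot (a b : Pt) : ℝ := a.1 * b.1 + a.2 * b.2

/-- The three generating vectors ξ₁ = (1,0), ξ₂ = (−1/2, √3/2), ξ₃ = (−1/2, −√3/2). -/
noncomputable def xiv : Fin 3 → Pt
  | 0 => ((1 : ℝ), (0 : ℝ))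
  | 1 => (-(1 / 2 : ℝ), Real.sqrt 3 / 2)
  | 2 => (-(1 / 2 : ℝ), -(Real.sqrt 3 / 2))

/-- Dual coordinates d_i(x) = −x·ξ_i. -/
noncomputable def dcoord (i : Fin 3) (x : Pt) : ℝ := -(pdot x (xiv i))

/-- Direction of the ray Ξ_i^s(·): ξ_i rotated by −90° for s = +(true), by +90° for
s = −(false), so that Ξ_i⁺(v)−v, ℝ₊ξ_i, Ξ_i⁻(v)−v follow anticlockwise. -/
noncomputable def rayDir (i : Fin 3) (s : Bool) : Pt :=
  if s then ((xiv i).2, -(xiv i).1) else (-(xiv i).2, (xiv i).1)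

/-- The ray Ξ_i^s(v). -/
def XiRay (i : Fin 3) (s : Bool) (v : Pt) : Set Pt :=
  {x | ∃ t : ℝ, 0 ≤ t ∧ x = v + t • rayDir i s}

/-- A finite line (nondegenerate segment). -/
def IsSegL (S : Set Pt) : Prop := ∃ a b : Pt, a ≠ b ∧ S = segment ℝ a b

/-- A semiinfinite line (ray) with end a. -/
def IsRayFrom (a : Pt) (S : Set Pt) : Prop :=
  ∃ d : Pt, d ≠ 0 ∧ S = {x | ∃ t : ℝ, 0 ≤ t ∧ x = a + t • d}

/-- A semiinfinite line (ray). -/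
def IsRayL (S : Set Pt) : Prop := ∃ a : Pt, IsRayFrom a S

/-- A fully infinite line. -/
def IsFullLineL (S : Set Pt) : Prop := ∃ a d : Pt, d ≠ 0 ∧ S = {x | ∃ t : ℝ, x = a + t • d}

/-- A line: a segment, a ray or a full line. -/
def IsLineL (S : Set Pt) : Prop := IsSegL S ∨ IsRayL S ∨ IsFullLineL S

/-- `S` is perpendicular to ξ_i, i.e. the dual coordinate d_i is constant on S. -/
def PerpTo (i : Fin 3) (S : Set Pt) : Prop := ∀ x ∈ S, ∀ y ∈ S, pdot (x - y) (xiv i) = 0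

/-- w_i^s(v): the total weight of the lines of the system whose intersection with
Ξ_i^s(v) contains v and is a line (not a point). -/
noncomputable def wis (L : Finset (Set Pt)) (w : Set Pt → ℤ) (i : Fin 3) (s : Bool)
    (v : Pt) : ℤ :=
  ∑ ℓ ∈ L.filter (fun ℓ => v ∈ ℓ ∧ IsLineL (ℓ ∩ XiRay i s v)), w ℓ

/-- A Ξ-system: a finite set of lines, each perpendicular to some ξ_i. -/
def IsXiSystem (L : Finset (Set Pt)) : Prop := ∀ ℓ ∈ L, IsLineL ℓ ∧ ∃ i : Fin 3, PerpTo i ℓ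

/-- A pre-honeycomb: a Ξ-system with all w_i^s(v) nonnegative satisfying the
divergency (zero-tension) condition at every point. -/
def IsPreHoneycomb (L : Finset (Set Pt)) (w : Set Pt → ℤ) : Prop :=
  IsXiSystem L ∧ (∀ (v : Pt) (i : Fin 3) (s : Bool), 0 ≤ wis L w i s v) ∧
  ∀ (v : Pt) (i j : Fin 3),
    wis L w i true v - wis L w i false v = wis L w j true v - wis L w j false v

/-- The divergency div_w(v). -/
noncomputable def divw (L : Finset (Set Pt)) (w : Set Pt → ℤ) (v : Pt) : ℤ :=
  wis L w 0 true v - wis L w 0 false v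

/-- An interior (non-end) point of a line. -/
def InteriorPt (S : Set Pt) (x : Pt) : Prop :=
  x ∈ S ∧ ∃ d : Pt, d ≠ 0 ∧ ∃ ε : ℝ, 0 < ε ∧ ∀ t : ℝ, |t| ≤ ε → x + t • d ∈ S

/-- `v` is an end of the line `S` (so `S` is incident to `v` as a graph edge). -/
def IsEnd (v : Pt) (S : Set Pt) : Prop := v ∈ S ∧ ¬ InteriorPt S v

/-- A honeycomb: a (non-standard) planar graph with a nonempty finite vertex set, whose
edges are positively weighted lines, each vertex incident with at least 3 edges, no
interior point of an edge lying on another edge, the ends of edges being vertices, and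
the weighted edge set forming a pre-honeycomb. -/
structure Honeycomb : Type where
  verts : Finset Pt
  edges : Finset (Set Pt)
  w : Set Pt → ℤ
  verts_nonempty : verts.Nonempty
  degree : ∀ v ∈ verts, 3 ≤ (edges.filter fun e => IsEnd v e).card
  no_cross : ∀ e ∈ edges, ∀ e' ∈ edges, e ≠ e' → ∀ x : Pt, InteriorPt e x → x ∉ e'
  w_pos : ∀ e ∈ edges, 0 < w e
  ends_mem : ∀ e ∈ edges, ∀ x : Pt, IsEnd x e → x ∈ verts
  edge_touch : ∀ e ∈ edges, ∃ v ∈ verts, v ∈ e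
  pre : IsPreHoneycomb edges w

/-- Honeycombs H and H' are conformable via the bijections α (on vertices) and
β (on edges): incidences, weights and the containing rays Ξ_i^s are preserved. -/
def Conformable (H H' : Honeycomb) (α : Pt → Pt) (β : Set Pt → Set Pt) : Prop :=
  Set.BijOn α (↑H.verts) (↑H'.verts) ∧ Set.BijOn β (↑H.edges) (↑H'.edges) ∧
  ∀ v ∈ H.verts, ∀ e ∈ H.edges, IsEnd v e →
    IsEnd (α v) (β e) ∧ H.w e = H'.w (β e) ∧
      ∀ (i : Fin 3) (s : Bool), e ⊆ XiRay i s v → β e ⊆ XiRay i s (α v)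

/-- The two edges have the same constant dual coordinate. -/
def SameDc (e e' : Set Pt) : Prop :=
  ∀ i : Fin 3, PerpTo i e → PerpTo i e' ∧ ∀ x ∈ e, ∀ y ∈ e', dcoord i x = dcoord i y

/-- Equality of honeycombs (weights compared on the edges). -/
def HoneycombEqOn (H H' : Honeycomb) : Prop :=
  H.verts = H'.verts ∧ H.edges = H'.edges ∧ ∀ e ∈ H.edges, H.w e = H'.w e

/-- H is F-extreme: no honeycomb different from H is conformable to H with the same
constant dual coordinates on F. -/
def FExtreme (H : Honeycomb) (F : Finset (Set Pt)) : Prop :=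
  ¬ ∃ (H' : Honeycomb) (α : Pt → Pt) (β : Set Pt → Set Pt),
      Conformable H H' α β ∧ (∀ e ∈ F, SameDc e (β e)) ∧ ¬ HoneycombEqOn H H'

/-- A maximal line of H: a line covered by edges of H, maximal with this property. -/
def MaximalLine (H : Honeycomb) (ℓ : Set Pt) : Prop :=
  IsLineL ℓ ∧ (ℓ ⊆ ⋃ e ∈ H.edges, e) ∧
  ∀ ℓ' : Set Pt, IsLineL ℓ' → (ℓ' ⊆ ⋃ e ∈ H.edges, e) → ℓ ⊆ ℓ' → ℓ' = ℓ

namespace S13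
lemma pt_eq {u v : Pt} (h1 : u.1 = v.1) (h2 : u.2 = v.2) : u = v := Prod.ext h1 h2

lemma pdot_self_pos {d : Pt} (hd : d ≠ 0) : 0 < pdot d d := by
  have h : d.1 ≠ 0 ∨ d.2 ≠ 0 := by
    by_contra h; push_neg at h; exact hd (pt_eq h.1 h.2)
  unfold pdot
  rcases h with h | h <;> nlinarith [sq_nonneg d.1, sq_nonneg d.2, mul_self_pos.mpr h]

lemma perp_rep {u d : Pt} (hd : d ≠ 0) (h : pdot u (d.2, -d.1) = 0) : ∃ t : ℝ, u = t • d := by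
  have hdd : 0 < pdot d d := pdot_self_pos hd
  have hD : pdot d d ≠ 0 := ne_of_gt hdd
  have h' : u.1 * d.2 - u.2 * d.1 = 0 := by
    simp only [pdot] at h; linarith
  refine ⟨pdot u d / pdot d d, pt_eq ?_ ?_⟩
  · simp only [Prod.smul_fst, smul_eq_mul]
    rw [div_mul_eq_mul_div, eq_div_iff hD]
    simp only [pdot]; linear_combination d.2 * h'
  · simp only [Prod.smul_snd, smul_eq_mul]
    rw [div_mul_eq_mul_div, eq_div_iff hD]
    simp only [pdot]; linear_combination (-d.1) * h'

lemma pdot_smul_left (t : ℝ) (u v : Pt) : pdot (t • u) v = t * pdot u v := by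
  simp only [pdot, Prod.smul_fst, Prod.smul_snd, smul_eq_mul]; ring

lemma pdot_sub_dist (x y v : Pt) : pdot (x - y) v = pdot x v - pdot y v := by
  simp only [pdot, Prod.fst_sub, Prod.snd_sub]; ring

def lineTh (p d : Pt) : Set Pt := {x | ∃ t : ℝ, x = p + t • d}

lemma mem_lineTh_self (p d : Pt) : p ∈ lineTh p d := ⟨0, by simp⟩

lemma mem_lineTh_snd (p d : Pt) : p + d ∈ lineTh p d := ⟨1, by simp⟩

lemma param_inj {d : Pt} (hd : d ≠ 0) (p : Pt) : Function.Injective (fun t : ℝ => p + t • d) := by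
  intro a b h
  simp only [add_right_inj] at h
  have h2 : (a - b) • d = 0 := by rw [sub_smul, h, sub_self]
  rcases smul_eq_zero.mp h2 with h3 | h3
  · exact sub_eq_zero.mp h3
  · exact absurd h3 hd

lemma lineTh_eq_of_mem {p d x : Pt} (hx : x ∈ lineTh p d) : lineTh p d = lineTh x d := by
  obtain ⟨s, rfl⟩ := hx
  ext y
  constructor
  · rintro ⟨t, rfl⟩; exact ⟨t - s, by module⟩
  · rintro ⟨t, rfl⟩; exact ⟨s + t, by module⟩

lemma lineTh_smul {p d : Pt} {c : ℝ} (hc : c ≠ 0) : lineTh p (c • d) = lineTh p d := by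
  ext y
  constructor
  · rintro ⟨t, rfl⟩; exact ⟨t * c, by module⟩
  · rintro ⟨t, rfl⟩
    exact ⟨t / c, by rw [smul_smul, div_mul_cancel₀ _ hc]⟩

lemma sub_mem_smul {p d x y : Pt} (hx : x ∈ lineTh p d) (hy : y ∈ lineTh p d) :
    ∃ t : ℝ, y - x = t • d := by
  obtain ⟨s, rfl⟩ := hx; obtain ⟨t, rfl⟩ := hy
  exact ⟨t - s, by module⟩

lemma lineTh_unique {p d p' d' : Pt} {x y : Pt} (hd : d ≠ 0) (hd' : d' ≠ 0) (hxy : x ≠ y)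
    (hx : x ∈ lineTh p d) (hy : y ∈ lineTh p d) (hx' : x ∈ lineTh p' d') (hy' : y ∈ lineTh p' d') :
    lineTh p d = lineTh p' d' := by
  obtain ⟨t, ht⟩ := sub_mem_smul hx hy
  obtain ⟨t', ht'⟩ := sub_mem_smul hx' hy'
  have htn : t ≠ 0 := by
    rintro rfl
    rw [zero_smul] at ht
    exact hxy (sub_eq_zero.mp ht).symm
  have htn' : t' ≠ 0 := by
    rintro rfl
    rw [zero_smul] at ht'
    exact hxy (sub_eq_zero.mp ht').symm
  calc lineTh p d = lineTh x d := lineTh_eq_of_mem hx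
    _ = lineTh x (t • d) := (lineTh_smul htn).symm
    _ = lineTh x (y - x) := by rw [ht]
    _ = lineTh x (t' • d') := by rw [ht']
    _ = lineTh x d' := lineTh_smul htn'
    _ = lineTh p' d' := (lineTh_eq_of_mem hx').symm

lemma line_struct {S : Set Pt} (h : IsLineL S) :
    ∃ p d : Pt, d ≠ 0 ∧ p ∈ S ∧ p + d ∈ S ∧ S ⊆ lineTh p d := by
  rcases h with ⟨a, b, hab, rfl⟩ | ⟨a, d, hd, rfl⟩ | ⟨a, d, hd, rfl⟩
  · refine ⟨a, b - a, sub_ne_zero.mpr (Ne.symm hab), left_mem_segment ℝ a b, ?_, ?_⟩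
    · have : a + (b - a) = b := by module
      rw [this]; exact right_mem_segment ℝ a b
    · intro x hx
      rw [segment_eq_image' ℝ a b] at hx
      obtain ⟨θ, _, rfl⟩ := hx
      exact ⟨θ, rfl⟩
  · exact ⟨a, d, hd, ⟨0, le_refl 0, by simp⟩, ⟨1, by norm_num, by simp⟩,
      fun x ⟨t, _, hx⟩ => ⟨t, hx⟩⟩
  · exact ⟨a, d, hd, ⟨0, by simp⟩, ⟨1, by simp⟩, fun x hx => hx⟩

lemma line_convex {S : Set Pt} (h : IsLineL S) : Convex ℝ S := by
  rcases h with ⟨a, b, _, rfl⟩ | ⟨a, d, hd, rfl⟩ | ⟨a, d, hd, rfl⟩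
  · exact convex_segment a b
  · rintro x ⟨t1, ht1, rfl⟩ y ⟨t2, ht2, rfl⟩ u v hu hv huv
    refine ⟨u * t1 + v * t2, add_nonneg (mul_nonneg hu ht1) (mul_nonneg hv ht2), ?_⟩
    refine pt_eq ?_ ?_ <;>
      simp only [Prod.fst_add, Prod.snd_add, Prod.smul_fst, Prod.smul_snd, smul_eq_mul] <;>
      [linear_combination a.1 * huv; linear_combination a.2 * huv]
  · rintro x ⟨t1, rfl⟩ y ⟨t2, rfl⟩ u v hu hv huv
    refine ⟨u * t1 + v * t2, ?_⟩
    refine pt_eq ?_ ?_ <;>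
      simp only [Prod.fst_add, Prod.snd_add, Prod.smul_fst, Prod.smul_snd, smul_eq_mul] <;>
      [linear_combination a.1 * huv; linear_combination a.2 * huv]

lemma cont_pdot (a w : Pt) : Continuous fun x : Pt => pdot (x - a) w := by
  unfold pdot; fun_prop

lemma ray_closed {a d : Pt} (hd : d ≠ 0) :
    IsClosed {x : Pt | ∃ t : ℝ, 0 ≤ t ∧ x = a + t • d} := by
  have hset : {x : Pt | ∃ t : ℝ, 0 ≤ t ∧ x = a + t • d} =
      {x | pdot (x - a) (d.2, -d.1) = 0} ∩ {x | 0 ≤ pdot (x - a) d} := by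
    ext x
    constructor
    · rintro ⟨t, ht, rfl⟩
      constructor
      · show pdot (a + t • d - a) (d.2, -d.1) = 0
        have h0 : a + t • d - a = t • d := by module
        rw [h0, pdot_smul_left]
        simp only [pdot]; ring
      · show 0 ≤ pdot (a + t • d - a) d
        have h0 : a + t • d - a = t • d := by module
        rw [h0, pdot_smul_left]
        exact mul_nonneg ht (le_of_lt (pdot_self_pos hd))
    · rintro ⟨h1, h2⟩
      obtain ⟨t, htx⟩ := perp_rep hd h1
      refine ⟨t, ?_, by rw [← htx]; module⟩
      have h2' : 0 ≤ pdot (x - a) d := h2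
      rw [htx, pdot_smul_left] at h2'
      exact nonneg_of_mul_nonneg_right (by linarith : 0 ≤ pdot d d * t) (pdot_self_pos hd)
  rw [hset]
  exact (isClosed_eq (cont_pdot a _) continuous_const).inter
    (isClosed_le continuous_const (cont_pdot a d))

lemma full_closed {a d : Pt} (hd : d ≠ 0) :
    IsClosed {x : Pt | ∃ t : ℝ, x = a + t • d} := by
  have hset : {x : Pt | ∃ t : ℝ, x = a + t • d} = {x | pdot (x - a) (d.2, -d.1) = 0} := by
    ext x
    constructor
    · rintro ⟨t, rfl⟩
      show pdot (a + t • d - a) (d.2, -d.1) = 0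
      have h0 : a + t • d - a = t • d := by module
      rw [h0, pdot_smul_left]
      simp only [pdot]; ring
    · intro h1
      obtain ⟨t, htx⟩ := perp_rep hd h1
      exact ⟨t, by rw [← htx]; module⟩
  rw [hset]
  exact isClosed_eq (cont_pdot a _) continuous_const

lemma seg_closed (a b : Pt) : IsClosed (segment ℝ a b) := by
  rw [segment_eq_image' ℝ a b]
  exact ((isCompact_Icc).image (by fun_prop)).isClosed

lemma line_closed {S : Set Pt} (h : IsLineL S) : IsClosed S := by
  rcases h with ⟨a, b, _, rfl⟩ | ⟨a, ⟨d, hd, rfl⟩⟩ | ⟨a, d, hd, rfl⟩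
  · exact seg_closed a b
  · exact ray_closed hd
  · exact full_closed hd

lemma line_infinite {S : Set Pt} (h : IsLineL S) : S.Infinite := by
  obtain ⟨p, d, hd, hp, hpd, _⟩ := line_struct h
  have hconv := line_convex h
  have hmem : ∀ n : ℕ, p + ((1:ℝ)/(n+1)) • d ∈ S := by
    intro n
    have hb : (0:ℝ) ≤ 1/(n+1) := by positivity
    have hb1 : (1:ℝ)/(n+1) ≤ 1 := by
      rw [div_le_one (by positivity)]
      have : (0:ℝ) ≤ n := Nat.cast_nonneg n
      linarith
    have h2 := hconv hp hpd (by linarith : (0:ℝ) ≤ 1 - 1/(n+1)) hb (by ring)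
    have heq : (1 - 1/(n+1:ℝ)) • p + ((1:ℝ)/(n+1)) • (p + d) = p + ((1:ℝ)/(n+1)) • d := by
      module
    rwa [heq] at h2
  apply Set.infinite_of_injective_forall_mem (f := fun n : ℕ => p + ((1:ℝ)/(n+1:ℝ)) • d) ?_ hmem
  intro m n hmn
  have h2 := param_inj hd p hmn
  have hm : ((m:ℝ)+1) ≠ 0 := by positivity
  have hn : ((n:ℝ)+1) ≠ 0 := by positivity
  field_simp at h2
  replace h2 : (n:ℝ) = m := by linarith
  first
    | exact h2.symm
    | exact h2
    | exact_mod_cast h2.symm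
    | exact_mod_cast h2
    | omega

lemma interval_class {T : Set ℝ} (hc : IsClosed T) (hconv : Convex ℝ T) {a b : ℝ}
    (ha : a ∈ T) (hb : b ∈ T) (hab : a ≠ b) :
    (∃ u v : ℝ, u < v ∧ T = Set.Icc u v) ∨ (∃ u, T = Set.Ici u) ∨
      (∃ u, T = Set.Iic u) ∨ T = Set.univ := by
  have hord : T.OrdConnected := (convex_iff_ordConnected.mp hconv)
  have hne : T.Nonempty := ⟨a, ha⟩
  by_cases hbb : BddBelow T <;> by_cases hba : BddAbove T
  · left
    have hm : sInf T ∈ T := hc.csInf_mem hne hbb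
    have hM : sSup T ∈ T := hc.csSup_mem hne hba
    refine ⟨sInf T, sSup T, ?_, ?_⟩
    · rcases lt_or_ge a b with h | h
      · exact lt_of_le_of_lt (csInf_le hbb ha) (lt_of_lt_of_le h (le_csSup hba hb))
      · have h' : b < a := lt_of_le_of_ne h (Ne.symm hab)
        exact lt_of_le_of_lt (csInf_le hbb hb) (lt_of_lt_of_le h' (le_csSup hba ha))
    · apply Set.Subset.antisymm
      · exact fun z hz => ⟨csInf_le hbb hz, le_csSup hba hz⟩
      · exact hord.out hm hM
  · right; left
    have hm : sInf T ∈ T := hc.csInf_mem hne hbb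
    refine ⟨sInf T, Set.Subset.antisymm (fun z hz => csInf_le hbb hz) ?_⟩
    intro z hz
    obtain ⟨y, hy, hzy⟩ := not_bddAbove_iff.mp hba z
    exact hord.out hm hy ⟨hz, le_of_lt hzy⟩
  · right; right; left
    have hM : sSup T ∈ T := hc.csSup_mem hne hba
    refine ⟨sSup T, Set.Subset.antisymm (fun z hz => le_csSup hba hz) ?_⟩
    intro z hz
    obtain ⟨y, hy, hzy⟩ := not_bddBelow_iff.mp hbb z
    exact hord.out hy hM ⟨le_of_lt hzy, hz⟩
  · right; right; right
    apply Set.eq_univ_of_forall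
    intro z
    obtain ⟨y, hy, hzy⟩ := not_bddBelow_iff.mp hbb z
    obtain ⟨y', hy', hzy'⟩ := not_bddAbove_iff.mp hba z
    exact hord.out hy hy' ⟨le_of_lt hzy, le_of_lt hzy'⟩

lemma union_convex_1D {T1 T2 : Set ℝ} (h1 : Convex ℝ T1) (h2 : Convex ℝ T2)
    (hm : (T1 ∩ T2).Nonempty) : Convex ℝ (T1 ∪ T2) := by
  obtain ⟨u, hu1, hu2⟩ := hm
  rw [convex_iff_ordConnected]
  have ho1 := convex_iff_ordConnected.mp h1
  have ho2 := convex_iff_ordConnected.mp h2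
  constructor
  intro x hx y hy z hz
  rcases hx with hx | hx <;> rcases hy with hy | hy
  · exact Or.inl (ho1.out hx hy hz)
  · rcases le_total z u with h | h
    · exact Or.inl (ho1.out hx hu1 ⟨hz.1, h⟩)
    · exact Or.inr (ho2.out hu2 hy ⟨h, hz.2⟩)
  · rcases le_total z u with h | h
    · exact Or.inr (ho2.out hx hu2 ⟨hz.1, h⟩)
    · exact Or.inl (ho1.out hu1 hy ⟨h, hz.2⟩)
  · exact Or.inr (ho2.out hx hy hz)

/-- the image of an interval-like set under the line parameterization is a line -/
lemma image_line {p d : Pt} (hd : d ≠ 0) {T : Set ℝ}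
    (hT : (∃ u v : ℝ, u < v ∧ T = Set.Icc u v) ∨ (∃ u, T = Set.Ici u) ∨
      (∃ u, T = Set.Iic u) ∨ T = Set.univ) :
    IsLineL ((fun t : ℝ => p + t • d) '' T) := by
  rcases hT with ⟨u, v, huv, rfl⟩ | ⟨u, rfl⟩ | ⟨u, rfl⟩ | rfl
  · left
    refine ⟨p + u • d, p + v • d, ?_, ?_⟩
    · intro h
      exact absurd (param_inj hd p h) (ne_of_lt huv)
    · rw [segment_eq_image' ℝ _ _]
      ext x
      constructor
      · rintro ⟨t, ⟨htu, htv⟩, rfl⟩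
        refine ⟨(t - u)/(v - u), ⟨div_nonneg (by linarith) (by linarith), ?_⟩, ?_⟩
        · rw [div_le_one (by linarith)]; linarith
        · have hvu : v - u ≠ 0 := ne_of_gt (by linarith)
          show p + u • d + ((t - u)/(v - u)) • (p + v • d - (p + u • d)) = p + t • d
          have hx : p + v • d - (p + u • d) = (v - u) • d := by module
          rw [hx, smul_smul, div_mul_cancel₀ _ hvu]
          module
      · rintro ⟨θ, ⟨hθ0, hθ1⟩, rfl⟩
        refine ⟨u + θ * (v - u), ⟨by nlinarith, by nlinarith⟩, ?_⟩
        show p + (u + θ * (v - u)) • d = p + u • d + θ • (p + v • d - (p + u • d))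
        module
  · right; left
    refine ⟨p + u • d, d, hd, ?_⟩
    ext x
    constructor
    · rintro ⟨t, htu, rfl⟩
      exact ⟨t - u, sub_nonneg.mpr htu, by module⟩
    · rintro ⟨s, hs, rfl⟩
      exact ⟨u + s, le_add_of_nonneg_right hs, by module⟩
  · right; left
    refine ⟨p + u • d, -d, neg_ne_zero.mpr hd, ?_⟩
    ext x
    constructor
    · rintro ⟨t, htu, rfl⟩
      exact ⟨u - t, sub_nonneg.mpr htu, by module⟩
    · rintro ⟨s, hs, rfl⟩
      exact ⟨u - s, sub_le_self u hs, by module⟩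
  · right; right
    refine ⟨p, d, hd, ?_⟩
    ext x
    constructor
    · rintro ⟨t, _, rfl⟩
      exact ⟨t, rfl⟩
    · rintro ⟨t, rfl⟩
      exact ⟨t, trivial, rfl⟩

lemma set_eq_image {S : Set Pt} {p d : Pt} (hsub : S ⊆ lineTh p d) :
    S = (fun t : ℝ => p + t • d) '' {t : ℝ | p + t • d ∈ S} := by
  ext x
  constructor
  · intro hx
    obtain ⟨t, rfl⟩ := hsub hx
    exact ⟨t, hx, rfl⟩
  · rintro ⟨t, ht, rfl⟩
    exact ht

lemma union_isLineL {S1 S2 : Set Pt} (h1 : IsLineL S1) (h2 : IsLineL S2) {p d : Pt}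
    (hd : d ≠ 0) (hs1 : S1 ⊆ lineTh p d) (hs2 : S2 ⊆ lineTh p d)
    (hmeet : (S1 ∩ S2).Nonempty) : IsLineL (S1 ∪ S2) := by
  set f : ℝ → Pt := fun t => p + t • d with hf
  set T1 : Set ℝ := {t | f t ∈ S1} with hT1
  set T2 : Set ℝ := {t | f t ∈ S2} with hT2
  have hcont : Continuous f := by fun_prop
  have hconv1 : Convex ℝ T1 := by
    intro a ha b hb μ ν hμ hν hμν
    show f (μ • a + ν • b) ∈ S1
    simp only [smul_eq_mul]
    have heq : f (μ * a + ν * b) = μ • f a + ν • f b := by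
      simp only [hf]
      have : μ • (p + a • d) + ν • (p + b • d) = (μ + ν) • p + (μ * a + ν * b) • d := by
        module
      rw [this, hμν, one_smul]
    rw [heq]
    exact line_convex h1 ha hb hμ hν hμν
  have hconv2 : Convex ℝ T2 := by
    intro a ha b hb μ ν hμ hν hμν
    show f (μ • a + ν • b) ∈ S2
    simp only [smul_eq_mul]
    have heq : f (μ * a + ν * b) = μ • f a + ν • f b := by
      simp only [hf]
      have : μ • (p + a • d) + ν • (p + b • d) = (μ + ν) • p + (μ * a + ν * b) • d := by
        module
      rw [this, hμν, one_smul]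
    rw [heq]
    exact line_convex h2 ha hb hμ hν hμν
  have hcl1 : IsClosed T1 := (line_closed h1).preimage hcont
  have hcl2 : IsClosed T2 := (line_closed h2).preimage hcont
  have hmeetT : (T1 ∩ T2).Nonempty := by
    obtain ⟨x, hx1, hx2⟩ := hmeet
    obtain ⟨t, rfl⟩ := hs1 hx1
    exact ⟨t, hx1, hx2⟩
  have hTconv := union_convex_1D hconv1 hconv2 hmeetT
  have hTcl : IsClosed (T1 ∪ T2) := hcl1.union hcl2
  -- two distinct points in T1
  obtain ⟨q, e, he, hq, hqe, hsub'⟩ := line_struct h1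
  obtain ⟨ta, hta⟩ := hs1 hq
  obtain ⟨tb, htb⟩ := hs1 hqe
  have htab : ta ≠ tb := by
    intro h
    rw [h] at hta
    rw [← htb] at hta
    have : e = 0 := by
      have h2 : q + e = q + 0 := by rw [add_zero]; exact hta.symm
      exact add_left_cancel h2
    exact he this
  have haT : ta ∈ T1 ∪ T2 := Or.inl (show p + ta • d ∈ S1 by rw [← hta]; exact hq)
  have hbT : tb ∈ T1 ∪ T2 := Or.inl (show p + tb • d ∈ S1 by rw [← htb]; exact hqe)
  have hcls := interval_class hTcl hTconv haT hbT htab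
  have himg : S1 ∪ S2 = f '' (T1 ∪ T2) := by
    rw [Set.image_union]
    rw [← set_eq_image hs1, ← set_eq_image hs2]
  rw [himg]
  exact image_line hd hcls

lemma sqrt3_pos : (0:ℝ) < Real.sqrt 3 := Real.sqrt_pos.mpr (by norm_num)

lemma aux0 {u : Pt} (h1 : u.1 = 0) (h2 : u.2 * Real.sqrt 3 = 0) : u = 0 := by
  have := (mul_eq_zero.mp h2).resolve_right (ne_of_gt sqrt3_pos)
  exact pt_eq h1 this

lemma perp_two {u : Pt} {i j : Fin 3} (hij : i ≠ j) (hi : pdot u (xiv i) = 0)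
    (hj : pdot u (xiv j) = 0) : u = 0 := by
  fin_cases i <;> fin_cases j <;> simp only [xiv, pdot] at hi hj
  · simp at hij
  · exact aux0 (by linear_combination hi) (by linear_combination hi + 2*hj)
  · exact aux0 (by linear_combination hi) (by linear_combination -hi - 2*hj)
  · exact aux0 (by linear_combination hj) (by linear_combination hj + 2*hi)
  · simp at hij
  · exact aux0 (by linear_combination -hi - hj) (by linear_combination hi - hj)
  · exact aux0 (by linear_combination hj) (by linear_combination -hj - 2*hi)
  · exact aux0 (by linear_combination -hi - hj) (by linear_combination hj - hi)
  · simp at hij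

/-! ### XiRay and ends -/

lemma xiv_ne (i : Fin 3) : xiv i ≠ 0 := by
  intro h
  have h1 := congrArg Prod.fst h
  have h2 := congrArg Prod.snd h
  fin_cases i <;> simp [xiv] at h1 h2 <;> norm_num at h1 h2

lemma rayDir_true (i : Fin 3) : rayDir i true = ((xiv i).2, -(xiv i).1) := by
  simp [rayDir]

lemma rayDir_false (i : Fin 3) : rayDir i false = -rayDir i true := by
  simp only [rayDir, if_true, if_false, Bool.false_eq_true]
  exact pt_eq (by simp) (by simp)

lemma rayDir_ne (i : Fin 3) (s : Bool) : rayDir i s ≠ 0 := by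
  intro h0
  apply xiv_ne i
  cases s <;>
    simp only [rayDir, if_true, if_false, Bool.false_eq_true, Prod.ext_iff] at h0 <;>
    · obtain ⟨ha, hb⟩ := h0
      refine pt_eq ?_ ?_ <;> simp only [Prod.fst_zero, Prod.snd_zero] at * <;> linarith

lemma pdot_rayDir (i : Fin 3) (s : Bool) : pdot (rayDir i s) (xiv i) = 0 := by
  cases s <;> simp only [rayDir, if_true, if_false, Bool.false_eq_true, pdot] <;> ring

lemma pdot_add_smul (v w u : Pt) (t : ℝ) :
    pdot (v + t • w) u = pdot v u + t * pdot w u := by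
  simp only [pdot, Prod.fst_add, Prod.snd_add, Prod.smul_fst, Prod.smul_snd, smul_eq_mul]; ring

lemma mem_XiRay_dcoord {i : Fin 3} {s : Bool} {v x : Pt} (h : x ∈ XiRay i s v) :
    dcoord i x = dcoord i v := by
  obtain ⟨t, ht, rfl⟩ := h
  unfold dcoord
  rw [pdot_add_smul, pdot_rayDir, mul_zero, add_zero]

lemma dcoord_diff {i : Fin 3} {x y : Pt} (h : pdot (x - y) (xiv i) = 0) :
    dcoord i x = dcoord i y := by
  unfold dcoord
  rw [pdot_sub_dist] at h
  linarith

lemma dcoord_diff' {i : Fin 3} {x y : Pt} (h : dcoord i x = dcoord i y) :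
    pdot (x - y) (xiv i) = 0 := by
  unfold dcoord at h
  rw [pdot_sub_dist]
  linarith

lemma line_nonempty {S : Set Pt} (h : IsLineL S) : S.Nonempty := by
  obtain ⟨p, _, _, hp, _, _⟩ := line_struct h
  exact ⟨p, hp⟩

lemma perp_xiv_dir {d : Pt} {i : Fin 3} (hd : d ≠ 0) (h : pdot d (xiv i) = 0) :
    ∃ t : ℝ, t ≠ 0 ∧ d = t • rayDir i true := by
  have hR : rayDir i true ≠ 0 := rayDir_ne i true
  have hperp : pdot d ((rayDir i true).2, -(rayDir i true).1) = 0 := by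
    rw [rayDir_true]
    simp only [pdot] at h ⊢
    linarith
  obtain ⟨t, ht⟩ := perp_rep hR hperp
  refine ⟨t, ?_, ht⟩
  rintro rfl
  rw [zero_smul] at ht
  exact hd ht

lemma not_interior_of_subset_ray {S : Set Pt} {a d : Pt}
    (hS : S ⊆ {x | ∃ t : ℝ, 0 ≤ t ∧ x = a + t • d}) : ¬ InteriorPt S a := by
  rintro ⟨-, d0, hd0, ε, hε, hmem⟩
  obtain ⟨t1, ht1, he1⟩ := hS (hmem ε (by rw [abs_of_pos hε]))
  obtain ⟨t2, ht2, he2⟩ := hS (hmem (-ε) (by rw [abs_neg, abs_of_pos hε]))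
  have h1 : ε • d0 = t1 • d := add_left_cancel he1
  have h2 : -(ε • d0) = t2 • d := by
    rw [← neg_smul]; exact add_left_cancel he2
  have hsum : (t1 + t2) • d = 0 := by
    rw [add_smul, ← h1, ← h2, add_neg_cancel]
  have hd0' : ε • d0 ≠ 0 := smul_ne_zero (ne_of_gt hε) hd0
  rcases smul_eq_zero.mp hsum with h3 | h3
  · have ht10 : t1 = 0 := by linarith
    rw [ht10, zero_smul] at h1
    exact hd0' h1
  · rw [h3, smul_zero] at h1
    exact hd0' h1

lemma seg_subset_ray (a b : Pt) : segment ℝ a b ⊆ {x | ∃ t : ℝ, 0 ≤ t ∧ x = a + t • (b - a)} := by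
  intro x hx
  rw [segment_eq_image' ℝ a b] at hx
  obtain ⟨θ, ⟨h0, _⟩, rfl⟩ := hx
  exact ⟨θ, h0, rfl⟩

lemma isEnd_seg_left {a b : Pt} : IsEnd a (segment ℝ a b) :=
  ⟨left_mem_segment ℝ a b, not_interior_of_subset_ray (seg_subset_ray a b)⟩

lemma isEnd_seg_right {a b : Pt} : IsEnd b (segment ℝ a b) := by
  rw [segment_symm]
  exact isEnd_seg_left

lemma interior_of_seg_mid {a b z : Pt} (hz : z ∈ segment ℝ a b) (hza : z ≠ a) (hzb : z ≠ b) :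
    InteriorPt (segment ℝ a b) z := by
  rw [segment_eq_image' ℝ a b] at hz
  obtain ⟨θ, ⟨h0, h1⟩, rfl⟩ := hz
  have hab : b - a ≠ 0 := by
    intro h
    apply hza
    simp [h]
  have hθ0 : θ ≠ 0 := by rintro rfl; simp at hza
  have hθ1 : θ ≠ 1 := by
    rintro rfl
    apply hzb
    module
  have hθ0' : 0 < θ := lt_of_le_of_ne h0 (Ne.symm hθ0)
  have hθ1' : θ < 1 := lt_of_le_of_ne h1 hθ1
  refine ⟨by rw [segment_eq_image' ℝ a b]; exact ⟨θ, ⟨h0, h1⟩, rfl⟩, b - a, hab,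
    min θ (1 - θ), lt_min hθ0' (by linarith), ?_⟩
  intro t ht
  rw [segment_eq_image' ℝ a b]
  obtain ⟨hle1, hle2⟩ := abs_le.mp ht
  have hm1 : min θ (1-θ) ≤ θ := min_le_left _ _
  have hm2 : min θ (1-θ) ≤ 1 - θ := min_le_right _ _
  refine ⟨θ + t, ⟨by linarith, by linarith⟩, by module⟩

lemma isEnd_seg_ends {a b z : Pt} (hz : IsEnd z (segment ℝ a b)) (hab : a ≠ b) :
    z = a ∨ z = b := by
  by_contra h
  push_neg at h
  exact hz.2 (interior_of_seg_mid hz.1 h.1 h.2)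

lemma ray_interior {a d z : Pt} (hz : z ∈ {x : Pt | ∃ t : ℝ, 0 ≤ t ∧ x = a + t • d})
    (hza : z ≠ a) (hd : d ≠ 0) : InteriorPt {x : Pt | ∃ t : ℝ, 0 ≤ t ∧ x = a + t • d} z := by
  obtain ⟨t, ht, rfl⟩ := hz
  have htpos : 0 < t := by
    rcases lt_or_eq_of_le ht with h | h
    · exact h
    · exfalso; apply hza; rw [← h, zero_smul, add_zero]
  refine ⟨⟨t, ht, rfl⟩, d, hd, t, htpos, ?_⟩
  intro s hs
  obtain ⟨h1, h2⟩ := abs_le.mp hs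
  exact ⟨t + s, by linarith, by module⟩

lemma ray_isEnd {a d z : Pt} (hd : d ≠ 0)
    (hz : IsEnd z {x : Pt | ∃ t : ℝ, 0 ≤ t ∧ x = a + t • d}) : z = a := by
  by_contra h
  exact hz.2 (ray_interior hz.1 h hd)

lemma isEnd_ray_self {a d : Pt} : IsEnd a {x : Pt | ∃ t : ℝ, 0 ≤ t ∧ x = a + t • d} :=
  ⟨⟨0, le_refl 0, by simp⟩, not_interior_of_subset_ray (fun x hx => hx)⟩

lemma full_no_end {a d z : Pt} (hd : d ≠ 0)
    (hz : IsEnd z {x : Pt | ∃ t : ℝ, x = a + t • d}) : False := by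
  obtain ⟨t, rfl⟩ := hz.1
  exact hz.2 ⟨⟨t, rfl⟩, d, hd, 1, one_pos, fun s _ => ⟨t + s, by module⟩⟩

lemma line_end_determined {S : Set Pt} (h : IsLineL S) {a b : Pt} (hab : a ≠ b)
    (ha : IsEnd a S) (hb : IsEnd b S) : S = segment ℝ a b := by
  rcases h with ⟨x, y, hxy, rfl⟩ | ⟨q, dd, hdd, rfl⟩ | ⟨q, dd, hdd, rfl⟩
  · rcases isEnd_seg_ends ha hxy with rfl | rfl <;> rcases isEnd_seg_ends hb hxy with rfl | rfl
    · exact absurd rfl hab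
    · rfl
    · exact segment_symm ℝ _ _
    · exact absurd rfl hab
  · exfalso
    have h1 := ray_isEnd hdd ha
    have h2 := ray_isEnd hdd hb
    exact hab (h1.trans h2.symm)
  · exact (full_no_end hdd ha).elim

lemma end_sub_ray {S : Set Pt} {i : Fin 3} {v : Pt} (hconv : Convex ℝ S) (hperp : PerpTo i S)
    (hv : IsEnd v S) : ∃ s : Bool, S ⊆ XiRay i s v := by
  set R := rayDir i true with hRdef
  have hR : R ≠ 0 := rayDir_ne i true
  have hrep : ∀ x ∈ S, ∃ t : ℝ, x = v + t • R := by
    intro x hx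
    have hp : pdot (x - v) (xiv i) = 0 := hperp x hx v hv.1
    have hperp2 : pdot (x - v) (R.2, -R.1) = 0 := by
      rw [hRdef, rayDir_true]
      simp only [pdot] at hp ⊢
      linarith
    obtain ⟨t, ht⟩ := perp_rep hR hperp2
    exact ⟨t, by rw [← ht]; module⟩
  by_cases hpos : ∀ x ∈ S, ∀ t : ℝ, x = v + t • R → 0 ≤ t
  · refine ⟨true, fun x hx => ?_⟩
    obtain ⟨t, ht⟩ := hrep x hx
    exact ⟨t, hpos x hx t ht, ht⟩
  by_cases hneg : ∀ x ∈ S, ∀ t : ℝ, x = v + t • R → t ≤ 0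
  · refine ⟨false, fun x hx => ?_⟩
    obtain ⟨t, ht⟩ := hrep x hx
    refine ⟨-t, neg_nonneg.mpr (hneg x hx t ht), ?_⟩
    rw [ht, rayDir_false]
    module
  exfalso
  push_neg at hpos hneg
  obtain ⟨x1, hx1, t1, he1, ht1⟩ := hpos
  obtain ⟨x2, hx2, t2, he2, ht2⟩ := hneg
  apply hv.2
  have ht12 : t1 < t2 := lt_trans ht1 ht2
  refine ⟨hv.1, R, hR, min (-t1) t2, lt_min (by linarith) (by linarith), ?_⟩
  intro t htle
  obtain ⟨hg1, hg2⟩ := abs_le.mp htle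
  have hm1 : min (-t1) t2 ≤ -t1 := min_le_left _ _
  have hm2 : min (-t1) t2 ≤ t2 := min_le_right _ _
  have hrange1 : t1 ≤ t := by linarith
  have hrange2 : t ≤ t2 := by linarith
  set μ := (t2 - t) / (t2 - t1) with hμdef
  have hden : (0:ℝ) < t2 - t1 := by linarith
  have hμ0 : 0 ≤ μ := div_nonneg (by linarith) (le_of_lt hden)
  have hμ1 : μ ≤ 1 := by
    rw [hμdef, div_le_one hden]; linarith
  have hcomb := hconv hx1 hx2 hμ0 (by linarith : (0:ℝ) ≤ 1 - μ) (by ring)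
  have heq : μ • x1 + (1 - μ) • x2 = v + t • R := by
    rw [he1, he2]
    have hco : μ * t1 + (1 - μ) * t2 = t := by
      rw [hμdef]
      field_simp
      ring
    have : μ • (v + t1 • R) + (1 - μ) • (v + t2 • R) = v + (μ * t1 + (1 - μ) * t2) • R := by
      module
    rw [this, hco]
  rwa [heq] at hcomb

/-! ### Honeycomb basics -/

lemma edge_isLine (H0 : Honeycomb) {e : Set Pt} (he : e ∈ H0.edges) : IsLineL e :=
  (H0.pre.1 e he).1

lemma vertex_not_interior (H0 : Honeycomb) {v : Pt} {e : Set Pt} (hv : v ∈ H0.verts)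
    (he : e ∈ H0.edges) : ¬ InteriorPt e v := by
  intro hint
  have h3 := H0.degree v hv
  have hne : (H0.edges.filter fun e' => IsEnd v e').Nonempty :=
    Finset.card_pos.mp (by omega)
  obtain ⟨e', he'⟩ := hne
  rw [Finset.mem_filter] at he'
  have hee : e ≠ e' := by rintro rfl; exact he'.2.2 hint
  exact H0.no_cross e he e' he'.1 hee v hint he'.2.1

lemma vertex_isEnd (H0 : Honeycomb) {v : Pt} {e : Set Pt} (hv : v ∈ H0.verts)
    (he : e ∈ H0.edges) (hmem : v ∈ e) : IsEnd v e :=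
  ⟨hmem, vertex_not_interior H0 hv he⟩

lemma edge_has_end (H0 : Honeycomb) {e : Set Pt} (he : e ∈ H0.edges) :
    ∃ v ∈ H0.verts, IsEnd v e := by
  obtain ⟨v, hv, hmem⟩ := H0.edge_touch e he
  exact ⟨v, hv, vertex_isEnd H0 hv he hmem⟩

/-! ### Maximal lines -/

lemma maxline_absorb (H0 : Honeycomb) {ℓ : Set Pt} (hml : MaximalLine H0 ℓ) {e : Set Pt}
    (he : e ∈ H0.edges) {x y : Pt} (hxe : x ∈ e) (hxl : x ∈ ℓ) (hye : y ∈ e) (hyl : y ∈ ℓ)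
    (hxy : x ≠ y) : e ⊆ ℓ := by
  obtain ⟨p, d, hd, hp, hpd, hsub⟩ := line_struct hml.1
  obtain ⟨pe, de, hde, hpe, hpede, hsube⟩ := line_struct (edge_isLine H0 he)
  have hline : lineTh pe de = lineTh p d :=
    lineTh_unique hde hd hxy (hsube hxe) (hsube hye) (hsub hxl) (hsub hyl)
  have hsube' : e ⊆ lineTh p d := hline ▸ hsube
  have hun : IsLineL (e ∪ ℓ) :=
    union_isLineL (edge_isLine H0 he) hml.1 hd hsube' hsub ⟨x, hxe, hxl⟩
  have hcov : (e ∪ ℓ) ⊆ ⋃ e' ∈ H0.edges, e' := by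
    apply Set.union_subset _ hml.2.1
    intro z hz
    rw [Set.mem_iUnion₂]
    exact ⟨e, he, hz⟩
  have heq := hml.2.2 (e ∪ ℓ) hun hcov Set.subset_union_right
  rw [← heq]
  exact Set.subset_union_left

lemma maxline_cover (H0 : Honeycomb) {ℓ : Set Pt} (hml : MaximalLine H0 ℓ) :
    ∀ x ∈ ℓ, ∃ e ∈ H0.edges, e ⊆ ℓ ∧ x ∈ e := by
  intro x hx
  by_contra hcon
  push_neg at hcon
  classical
  set N := H0.edges.filter (fun e => e ⊆ ℓ) with hN
  have hNcl : IsClosed (⋃ e ∈ N, (e : Set Pt)) := by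
    apply (N.finite_toSet).isClosed_biUnion
    intro e heN
    exact line_closed (edge_isLine H0 (Finset.mem_filter.mp heN).1)
  have hxN : x ∉ ⋃ e ∈ N, (e : Set Pt) := by
    intro hmem
    rw [Set.mem_iUnion₂] at hmem
    obtain ⟨e, heN, hxe⟩ := hmem
    rw [Finset.mem_filter] at heN
    exact hcon e heN.1 heN.2 hxe
  obtain ⟨ε, hε, hball⟩ := Metric.isOpen_iff.mp hNcl.isOpen_compl x hxN
  obtain ⟨p, d, hd, hp, hpd, hsub⟩ := line_struct hml.1
  have hq : ∃ q ∈ ℓ, q ≠ x := by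
    rcases eq_or_ne p x with rfl | h
    · refine ⟨p + d, hpd, ?_⟩
      intro h0
      apply hd
      have : p + d = p + 0 := by rw [add_zero]; exact h0
      exact add_left_cancel this
    · exact ⟨p, hp, h⟩
  obtain ⟨q, hq, hqx⟩ := hq
  set c : ℝ := min 1 (ε / (2 * (dist q x + 1))) with hc
  have hdistpos : (0:ℝ) < dist q x + 1 := by positivity
  have hcpos : 0 < c := lt_min one_pos (by positivity)
  have hc1 : c ≤ 1 := min_le_left _ _
  have hc2 : c ≤ ε / (2 * (dist q x + 1)) := min_le_right _ _
  set f : ℕ → Pt := fun n => x + (c / (n + 1)) • (q - x) with hf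
  have hconv := line_convex hml.1
  have hmeml : ∀ n : ℕ, f n ∈ ℓ := by
    intro n
    have ht0 : 0 < c / (n + 1 : ℝ) := by positivity
    have ht1 : c / (n + 1 : ℝ) ≤ 1 := by
      apply le_trans _ hc1
      rw [div_le_iff₀ (by positivity : (0:ℝ) < (n:ℝ) + 1)]
      nlinarith [Nat.cast_nonneg (α := ℝ) n]
    have hcomb := hconv hx hq (by linarith : (0:ℝ) ≤ 1 - c / (n+1)) (le_of_lt ht0) (by ring)
    have heq2 : (1 - c / (n+1:ℝ)) • x + (c / (n+1:ℝ)) • q = f n := by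
      rw [hf]; module
    rwa [heq2] at hcomb
  have hmemball : ∀ n : ℕ, f n ∈ Metric.ball x ε := by
    intro n
    rw [Metric.mem_ball, hf]
    have : dist (x + (c / (n + 1:ℝ)) • (q - x)) x = (c / (n+1:ℝ)) * dist q x := by
      rw [dist_eq_norm]
      have h0 : x + (c / (n + 1:ℝ)) • (q - x) - x = (c / (n+1:ℝ)) • (q - x) := by module
      rw [h0, norm_smul, Real.norm_eq_abs, abs_of_pos (by positivity), dist_eq_norm]
    rw [this]
    have hn1 : (1:ℝ) ≤ (n:ℝ) + 1 := by
      nlinarith [Nat.cast_nonneg (α := ℝ) n]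
    have hdq : (0:ℝ) ≤ dist q x := dist_nonneg
    have hstep : c / (n+1:ℝ) ≤ c := by
      rw [div_le_iff₀ (by positivity : (0:ℝ) < (n:ℝ)+1)]
      nlinarith
    have : c * dist q x < ε := by
      have h1 : c * dist q x ≤ (ε / (2 * (dist q x + 1))) * dist q x := by
        apply mul_le_mul_of_nonneg_right hc2 hdq
      have h2 : (ε / (2 * (dist q x + 1))) * dist q x < ε := by
        rw [div_mul_eq_mul_div, div_lt_iff₀ (by positivity)]
        nlinarith
      linarith
    nlinarith [mul_le_mul_of_nonneg_right hstep hdq]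
  set M := H0.edges.filter (fun e => ¬ e ⊆ ℓ) with hM
  set Z : Set Pt := ⋃ e ∈ M, (ℓ ∩ e) with hZ
  have hZfin : Z.Finite := by
    apply Set.Finite.biUnion (M.finite_toSet)
    intro e heM
    rw [Finset.mem_coe, hM, Finset.mem_filter] at heM
    apply Set.Subsingleton.finite
    intro x1 hx1 x2 hx2
    by_contra hne12
    exact heM.2 (maxline_absorb H0 hml heM.1 hx1.2 hx1.1 hx2.2 hx2.1 hne12)
  have hmemZ : ∀ n : ℕ, f n ∈ Z := by
    intro n
    have hfl := hmeml n
    obtain ⟨e, he, hfe⟩ := Set.mem_iUnion₂.mp (hml.2.1 hfl)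
    have heM : e ∈ M := by
      rw [hM, Finset.mem_filter]
      refine ⟨he, ?_⟩
      intro hsubl
      have : f n ∈ ⋃ e ∈ N, (e : Set Pt) := by
        rw [Set.mem_iUnion₂]
        exact ⟨e, Finset.mem_filter.mpr ⟨he, hsubl⟩, hfe⟩
      exact hball (hmemball n) this
    rw [hZ, Set.mem_iUnion₂]
    exact ⟨e, heM, hfl, hfe⟩
  have hinj : Function.Injective f := by
    intro m n hmn
    have h2 : c / (↑m + 1) = c / (↑n + 1) := param_inj (sub_ne_zero.mpr hqx) x hmn
    have hcne : c ≠ 0 := ne_of_gt hcpos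
    rw [div_eq_div_iff (by positivity) (by positivity)] at h2
    have h3 := mul_left_cancel₀ hcne (by linarith : c * ((m:ℝ) + 1) = c * ((n:ℝ) + 1))
    have h4 : (m:ℝ) = n := by linarith
    exact_mod_cast h4
  exact Set.infinite_of_injective_forall_mem hinj hmemZ hZfin

lemma maxline_perp (H0 : Honeycomb) {ℓ : Set Pt} (hml : MaximalLine H0 ℓ) :
    ∃ (i : Fin 3) (p d : Pt), d ≠ 0 ∧ p ∈ ℓ ∧ ℓ ⊆ lineTh p d ∧ pdot d (xiv i) = 0 ∧
      PerpTo i ℓ := by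
  obtain ⟨p, d, hd, hp, hpd, hsub⟩ := line_struct hml.1
  obtain ⟨e, he, hel, hpe⟩ := maxline_cover H0 hml p hp
  obtain ⟨pe, de, hde, hpe', hpede, hsube⟩ := line_struct (edge_isLine H0 he)
  obtain ⟨-, i, hperpe⟩ := H0.pre.1 e he
  have hperpd : pdot d (xiv i) = 0 := by
    have h1 : pdot (pe + de - pe) (xiv i) = 0 := hperpe _ hpede _ hpe'
    have h2 : pe + de - pe = de := by module
    rw [h2] at h1
    obtain ⟨t, ht⟩ := sub_mem_smul (hsub (hel hpe')) (hsub (hel hpede))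
    have h3 : pe + de - pe = t • d := ht
    rw [h2] at h3
    have htne : t ≠ 0 := by
      rintro rfl
      rw [zero_smul] at h3
      exact hde h3
    rw [h3, pdot_smul_left] at h1
    rcases mul_eq_zero.mp h1 with h | h
    · exact absurd h htne
    · exact h
  refine ⟨i, p, d, hd, hp, hsub, hperpd, ?_⟩
  intro x hx y hy
  obtain ⟨t, ht⟩ := sub_mem_smul (hsub hy) (hsub hx)
  rw [ht, pdot_smul_left, hperpd, mul_zero]

lemma maxline_same (H0 : Honeycomb) {ℓ1 ℓ2 : Set Pt} {i : Fin 3}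
    (h1 : MaximalLine H0 ℓ1) (h2 : MaximalLine H0 ℓ2) {u : Pt} (hu1 : u ∈ ℓ1) (hu2 : u ∈ ℓ2)
    {p1 d1 p2 d2 : Pt} (hd1 : d1 ≠ 0) (hd2 : d2 ≠ 0)
    (hs1 : ℓ1 ⊆ lineTh p1 d1) (hs2 : ℓ2 ⊆ lineTh p2 d2)
    (hp1 : pdot d1 (xiv i) = 0) (hp2 : pdot d2 (xiv i) = 0) : ℓ1 = ℓ2 := by
  have hR : rayDir i true ≠ 0 := rayDir_ne i true
  obtain ⟨t1, ht1, he1⟩ := perp_xiv_dir hd1 hp1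
  obtain ⟨t2, ht2, he2⟩ := perp_xiv_dir hd2 hp2
  have hl1 : ℓ1 ⊆ lineTh u (rayDir i true) := by
    have hx : lineTh p1 d1 = lineTh u d1 := lineTh_eq_of_mem (hs1 hu1)
    rw [hx, he1, lineTh_smul ht1] at hs1
    exact hs1
  have hl2 : ℓ2 ⊆ lineTh u (rayDir i true) := by
    have hx : lineTh p2 d2 = lineTh u d2 := lineTh_eq_of_mem (hs2 hu2)
    rw [hx, he2, lineTh_smul ht2] at hs2
    exact hs2
  have hun : IsLineL (ℓ1 ∪ ℓ2) :=
    union_isLineL h1.1 h2.1 hR hl1 hl2 ⟨u, hu1, hu2⟩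
  have hcov : (ℓ1 ∪ ℓ2) ⊆ ⋃ e ∈ H0.edges, e := Set.union_subset h1.2.1 h2.2.1
  have hq1 := h1.2.2 (ℓ1 ∪ ℓ2) hun hcov Set.subset_union_left
  have hq2 := h2.2.2 (ℓ1 ∪ ℓ2) hun hcov Set.subset_union_right
  exact hq1.symm.trans hq2

/-! ### The pinning lemma -/

lemma pin (H H' : Honeycomb) (F : Finset (Set Pt)) (hF : F ⊆ H.edges)
    (α : Pt → Pt) (β : Set Pt → Set Pt)
    (hβ : Set.BijOn β (↑H.edges) (↑H'.edges))
    (hcf : ∀ v ∈ H.verts, ∀ e ∈ H.edges, IsEnd v e →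
      IsEnd (α v) (β e) ∧ H.w e = H'.w (β e) ∧
        ∀ (i : Fin 3) (s : Bool), e ⊆ XiRay i s v → β e ⊆ XiRay i s (α v))
    (hdc : ∀ e ∈ F, SameDc e (β e))
    {ℓ : Set Pt} (hml : MaximalLine H ℓ) {e0 : Set Pt} (he0F : e0 ∈ F) (he0l : e0 ⊆ ℓ)
    {i : Fin 3} (hperp : PerpTo i ℓ)
    {u : Pt} (hu : u ∈ H.verts) (hul : u ∈ ℓ) :
    dcoord i (α u) = dcoord i u := by
  classical
  have he0 : e0 ∈ H.edges := hF he0F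
  set c := dcoord i u with hc
  have hconst : ∀ x ∈ ℓ, dcoord i x = c := by
    intro x hx
    exact dcoord_diff (hperp x hx u hul)
  have hkey : ∀ e ∈ H.edges, e ⊆ ℓ → ∀ v ∈ H.verts, IsEnd v e →
      ∀ x ∈ β e, dcoord i x = dcoord i (α v) := by
    intro e he hel v hv hend
    have hperpe : PerpTo i e := fun x hx y hy => hperp x (hel hx) y (hel hy)
    obtain ⟨s, hes⟩ := end_sub_ray (line_convex (edge_isLine H he)) hperpe hend
    have h3 := (hcf v hv e he hend).2.2 i s hes
    intro x hx
    exact mem_XiRay_dcoord (h3 hx)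
  have hβne : ∀ e ∈ H.edges, (β e).Nonempty := by
    intro e he
    exact line_nonempty (edge_isLine H' (hβ.mapsTo (Finset.mem_coe.mpr he)))
  set P : Set Pt → Prop := fun e => ∀ x ∈ β e, dcoord i x = c with hP
  have hpair : ∀ e ∈ H.edges, ∀ e' ∈ H.edges, e ⊆ ℓ → e' ⊆ ℓ →
      ∀ p : Pt, p ∈ e → p ∈ e' → P e → P e' := by
    intro e he e' he' hel hel' p hpe hpe' hPe
    by_cases heq : e = e'
    · rwa [← heq]
    have hend : IsEnd p e := ⟨hpe, fun hint => H.no_cross e he e' he' heq p hint hpe'⟩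
    have hend' : IsEnd p e' :=
      ⟨hpe', fun hint => H.no_cross e' he' e he (fun h => heq h.symm) p hint hpe⟩
    have hpv : p ∈ H.verts := H.ends_mem e he p hend
    have h1 := hkey e he hel p hpv hend
    have h2 := hkey e' he' hel' p hpv hend'
    obtain ⟨x0, hx0⟩ := hβne e he
    have hcp : dcoord i (α p) = c := by rw [← h1 x0 hx0]; exact hPe x0 hx0
    intro x hx
    rw [h2 x hx, hcp]
  have hPe0 : P e0 := by
    intro x hx
    have hperpe0 : PerpTo i e0 := fun a ha b hb => hperp a (he0l ha) b (he0l hb)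
    have hsd := hdc e0 he0F i hperpe0
    obtain ⟨y0, hy0⟩ := line_nonempty (edge_isLine H he0)
    rw [← hsd.2 y0 hy0 x hx]
    exact hconst y0 (he0l hy0)
  set NA := H.edges.filter (fun e => e ⊆ ℓ ∧ P e) with hNA
  set NB := H.edges.filter (fun e => e ⊆ ℓ ∧ ¬ P e) with hNB
  set A : Set Pt := ⋃ e ∈ NA, (e : Set Pt) with hA
  set B : Set Pt := ⋃ e ∈ NB, (e : Set Pt) with hB
  have hAcl : IsClosed A :=
    (NA.finite_toSet).isClosed_biUnion
      (fun e heN => line_closed (edge_isLine H (Finset.mem_filter.mp heN).1))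
  have hBcl : IsClosed B :=
    (NB.finite_toSet).isClosed_biUnion
      (fun e heN => line_closed (edge_isLine H (Finset.mem_filter.mp heN).1))
  have hdisj : ∀ x ∈ ℓ, x ∈ A → x ∈ B → False := by
    intro x hx hxA hxB
    obtain ⟨e, heN, hxe⟩ := Set.mem_iUnion₂.mp hxA
    obtain ⟨e', heN', hxe'⟩ := Set.mem_iUnion₂.mp hxB
    obtain ⟨he, hel, hPe⟩ := Finset.mem_filter.mp heN
    obtain ⟨he', hel', hPe'⟩ := Finset.mem_filter.mp heN'
    exact hPe' (hpair e he e' he' hel hel' x hxe hxe' hPe)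
  have hcover : ∀ x ∈ ℓ, x ∈ A ∪ B := by
    intro x hx
    obtain ⟨e, he, hel, hxe⟩ := maxline_cover H hml x hx
    by_cases hp : P e
    · left; rw [hA, Set.mem_iUnion₂]
      exact ⟨e, Finset.mem_filter.mpr ⟨he, hel, hp⟩, hxe⟩
    · right; rw [hB, Set.mem_iUnion₂]
      exact ⟨e, Finset.mem_filter.mpr ⟨he, hel, hp⟩, hxe⟩
  have hlA : ℓ ⊆ A := by
    by_contra hnot
    obtain ⟨xB, hxBl, hxBA⟩ := Set.not_subset.mp hnot
    have h1 : (ℓ ∩ Aᶜ).Nonempty := ⟨xB, hxBl, hxBA⟩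
    obtain ⟨x0, hx0⟩ := line_nonempty (edge_isLine H he0)
    have hx0A : x0 ∈ A := by
      rw [hA, Set.mem_iUnion₂]
      exact ⟨e0, Finset.mem_filter.mpr ⟨he0, he0l, hPe0⟩, hx0⟩
    have h2 : (ℓ ∩ Bᶜ).Nonempty :=
      ⟨x0, he0l hx0, fun hxB => hdisj x0 (he0l hx0) hx0A hxB⟩
    have hpc := (line_convex hml.1).isPreconnected
    have hsubc : ℓ ⊆ Bᶜ ∪ Aᶜ := by
      intro x hx
      by_cases hxA : x ∈ A
      · left; exact fun hxB => hdisj x hx hxA hxB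
      · right; exact hxA
    obtain ⟨z, hzl, hzB, hzA⟩ := hpc Bᶜ Aᶜ hBcl.isOpen_compl hAcl.isOpen_compl hsubc h2 h1
    rcases hcover z hzl with hz | hz
    · exact hzA hz
    · exact hzB hz
  obtain ⟨e, heN, hue⟩ := Set.mem_iUnion₂.mp (hlA hul)
  obtain ⟨he, hel, hPes⟩ := Finset.mem_filter.mp heN
  have hend : IsEnd u e := vertex_isEnd H hu he hue
  have h1 := hkey e he hel u hu hend
  obtain ⟨x0, hx0⟩ := hβne e he
  rw [← h1 x0 hx0]
  exact hPes x0 hx0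
end S13

theorem stmt13 (H : Honeycomb) (F : Finset (Set Pt)) (hF : F ⊆ H.edges)
    (hyp : ∀ v ∈ H.verts, ∃ ℓ₁ ℓ₂ : Set Pt, ℓ₁ ≠ ℓ₂ ∧
      MaximalLine H ℓ₁ ∧ MaximalLine H ℓ₂ ∧ v ∈ ℓ₁ ∧ v ∈ ℓ₂ ∧
      (∃ e ∈ F, e ⊆ ℓ₁) ∧ (∃ e ∈ F, e ⊆ ℓ₂)) :
    FExtreme H F := by
  rintro ⟨H', α, β, ⟨hα, hβ, hcf⟩, hdc, hne⟩
  classical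
  apply hne
  -- Step 1: α fixes every vertex.
  have hfix : ∀ u ∈ H.verts, α u = u := by
    intro u hu
    obtain ⟨ℓ1, ℓ2, hne12, hml1, hml2, hu1, hu2, hf1, hf2⟩ := hyp u hu
    obtain ⟨i1, p1, d1, hd1, hp1, hs1, hpd1, hperp1⟩ := S13.maxline_perp H hml1
    obtain ⟨i2, p2, d2, hd2, hp2, hs2, hpd2, hperp2⟩ := S13.maxline_perp H hml2
    have hne_i : i1 ≠ i2 := by
      rintro rfl
      exact hne12 (S13.maxline_same H hml1 hml2 hu1 hu2 hd1 hd2 hs1 hs2 hpd1 hpd2)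
    obtain ⟨e1, he1F, he1l⟩ := hf1
    obtain ⟨e2, he2F, he2l⟩ := hf2
    have h1 := S13.pin H H' F hF α β hβ hcf hdc hml1 he1F he1l hperp1 hu hu1
    have h2 := S13.pin H H' F hF α β hβ hcf hdc hml2 he2F he2l hperp2 hu hu2
    have hz : α u - u = 0 :=
      S13.perp_two hne_i (S13.dcoord_diff' h1) (S13.dcoord_diff' h2)
    exact sub_eq_zero.mp hz
  -- Step 2: vertex sets agree.
  have hVeq : (H'.verts : Set Pt) = (H.verts : Set Pt) := by
    rw [← hα.image_eq]
    have himg : ∀ a ∈ (H.verts : Set Pt), α a = id a := fun a ha => hfix a ha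
    rw [Set.image_congr himg, Set.image_id]
  have hVfin : H'.verts = H.verts := Finset.coe_injective hVeq
  -- Step 3: β fixes every edge.
  have hbfix : ∀ e ∈ H.edges, β e = e := by
    intro e he
    have hβE : β e ∈ H'.edges := hβ.mapsTo (Finset.mem_coe.mpr he)
    have heL' : IsLineL (β e) := S13.edge_isLine H' hβE
    rcases S13.edge_isLine H he with ⟨a, b, hab, hee⟩ | ⟨a, dd, hdd, hee⟩ | ⟨a, dd, hdd, hee⟩
    · -- e is a segment
      subst hee
      have haE : IsEnd a (segment ℝ a b) := S13.isEnd_seg_left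
      have hbE : IsEnd b (segment ℝ a b) := S13.isEnd_seg_right
      have haV := H.ends_mem _ he a haE
      have hbV := H.ends_mem _ he b hbE
      have hca := (hcf a haV _ he haE).1
      have hcb := (hcf b hbV _ he hbE).1
      rw [hfix a haV] at hca
      rw [hfix b hbV] at hcb
      exact S13.line_end_determined heL' hab hca hcb
    · -- e is a ray
      subst hee
      obtain ⟨v, hv, hvE⟩ := S13.edge_has_end H he
      have hva : v = a := S13.ray_isEnd hdd hvE
      subst hva
      obtain ⟨-, i, hperpe⟩ := H.pre.1 _ he
      obtain ⟨s, hes⟩ := S13.end_sub_ray (S13.line_convex (S13.edge_isLine H he)) hperpe hvE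
      have hvdd : v + dd ∈ {x : Pt | ∃ t : ℝ, 0 ≤ t ∧ x = v + t • dd} :=
        ⟨1, zero_le_one, by rw [one_smul]⟩
      obtain ⟨t0, ht0, hdd0⟩ := hes hvdd
      have hdd_eq : dd = t0 • rayDir i s := add_left_cancel hdd0
      have ht0ne : t0 ≠ 0 := by rintro rfl; rw [zero_smul] at hdd_eq; exact hdd hdd_eq
      have ht0pos : 0 < t0 := lt_of_le_of_ne ht0 (Ne.symm ht0ne)
      have heXi : {x : Pt | ∃ t : ℝ, 0 ≤ t ∧ x = v + t • dd} = XiRay i s v := by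
        apply Set.Subset.antisymm hes
        rintro ⟨x1, x2⟩ ⟨r, hr, hxx⟩
        refine ⟨r / t0, div_nonneg hr (le_of_lt ht0pos), ?_⟩
        rw [hxx, hdd_eq, smul_smul, div_mul_cancel₀ _ ht0ne]
      have hce := hcf v hv _ he hvE
      have hbe_end := hce.1
      rw [hfix v hv] at hbe_end
      have hbray := hce.2.2 i s heXi.subset
      rw [hfix v hv] at hbray
      rcases heL' with ⟨x, y, hxy, hbee⟩ | ⟨q, d', hd', hbee⟩ | ⟨q, d', hd', hbee⟩
      · -- β e a segment: impossible
        exfalso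
        rw [hbee] at hbe_end hbray
        have hv_ends := S13.isEnd_seg_ends hbe_end hxy
        rcases hv_ends with hva2 | hva2
        · -- v = x; w := y
          have hwE : IsEnd y (segment ℝ x y) := S13.isEnd_seg_right
          have hwV' : y ∈ H'.verts := H'.ends_mem (β _) hβE y (by rw [hbee]; exact hwE)
          have hwV : y ∈ H.verts := by rwa [hVfin] at hwV'
          have hwXi : y ∈ XiRay i s v := hbray (right_mem_segment ℝ x y)
          have hwa : y ≠ v := by rw [hva2]; exact fun h => hxy (h.symm)
          have hwe : y ∈ {x : Pt | ∃ t : ℝ, 0 ≤ t ∧ x = v + t • dd} := heXi.symm.subset hwXi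
          exact S13.vertex_not_interior H hwV he (S13.ray_interior hwe hwa hdd)
        · -- v = y; w := x
          have hwE : IsEnd x (segment ℝ x y) := S13.isEnd_seg_left
          have hwV' : x ∈ H'.verts := H'.ends_mem (β _) hβE x (by rw [hbee]; exact hwE)
          have hwV : x ∈ H.verts := by rwa [hVfin] at hwV'
          have hwXi : x ∈ XiRay i s v := hbray (left_mem_segment ℝ x y)
          have hwa : x ≠ v := by rw [hva2]; exact hxy
          have hwe : x ∈ {x : Pt | ∃ t : ℝ, 0 ≤ t ∧ x = v + t • dd} := heXi.symm.subset hwXi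
          exact S13.vertex_not_interior H hwV he (S13.ray_interior hwe hwa hdd)
      · -- β e a ray: equality
        rw [hbee] at hbe_end hbray ⊢
        have hqa : v = q := S13.ray_isEnd hd' hbe_end
        subst hqa
        have hvd' : v + d' ∈ {x : Pt | ∃ t : ℝ, 0 ≤ t ∧ x = v + t • d'} :=
          ⟨1, zero_le_one, by rw [one_smul]⟩
        obtain ⟨t1, ht1, hd1e⟩ := hbray hvd'
        have hd'eq : d' = t1 • rayDir i s := add_left_cancel hd1e
        have ht1ne : t1 ≠ 0 := by rintro rfl; rw [zero_smul] at hd'eq; exact hd' hd'eq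
        have ht1pos : 0 < t1 := lt_of_le_of_ne ht1 (Ne.symm ht1ne)
        have h2 : {x : Pt | ∃ t : ℝ, 0 ≤ t ∧ x = v + t • d'} = XiRay i s v := by
          apply Set.Subset.antisymm hbray
          rintro ⟨x1, x2⟩ ⟨r, hr, hxx⟩
          refine ⟨r / t1, div_nonneg hr (le_of_lt ht1pos), ?_⟩
          rw [hxx, hd'eq, smul_smul, div_mul_cancel₀ _ ht1ne]
        rw [h2, ← heXi]
      · -- β e a full line: impossible
        exfalso
        rw [hbee] at hbe_end
        exact S13.full_no_end hd' hbe_end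
    · -- e a full line: impossible
      exfalso
      subst hee
      obtain ⟨v, hv, hvE⟩ := S13.edge_has_end H he
      exact S13.full_no_end hdd hvE
  -- Step 4: edge sets agree.
  have hEeq : (H'.edges : Set (Set Pt)) = (H.edges : Set (Set Pt)) := by
    rw [← hβ.image_eq]
    have himg : ∀ e ∈ (H.edges : Set (Set Pt)), β e = id e :=
      fun e heE => hbfix e (Finset.mem_coe.mp heE)
    rw [Set.image_congr himg, Set.image_id]
  have hEfin : H'.edges = H.edges := Finset.coe_injective hEeq
  refine ⟨hVfin.symm, hEfin.symm, ?_⟩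
  intro e he
  obtain ⟨v, hv, hvE⟩ := S13.edge_has_end H he
  have hw := (hcf v hv e he hvE).2.1
  rwa [hbfix e he] at hw
end
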